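/- Let f : ℝ → ℝ be four times continuously differentiable on an open interval with f''(x) ≠ 0 everywhere, and suppose f satisfies the ODE f''''·f'' = 3·(f''')^2. Let x(·) be a local inverse of -f' (assume f' is locally invertible) and define Y(X) = f(x(X)) - x(X)·(f')(x(X)), i.e., Y is obtained from f by the Legendre transformation (x, y, y1) ↦ (-y1, y - x·y1, x). Then Y is four times differentiable and satisfies Y'''' = 0. More precisely, at corresponding points, Y''''(X) = (f''''(x)·f''(x) - 3·f'''(x)^2)/f''(x)^5. -/

import Mathlib

open Topology


/-- Legendre transformation of the ODE `y'''' = 3 (y''')²/y''`.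
If `f` is `C⁴` on an open set `s` with `f'' ≠ 0`, satisfying `f'''' · f'' = 3 (f''')²`,
and `xinv` (continuous on an open set `t`, mapping into `s`) is a local inverse of `−f'`
(i.e. `f'(xinv X) = −X`), then the Legendre transform
`Y(X) = f(xinv X) − xinv X · f'(xinv X)` is four times (continuously) differentiable
with `Y''''(X) = (f''''(x) f''(x) − 3 f'''(x)²)/f''(x)⁵` at `x = xinv X`,
hence `Y'''' = 0`. -/
theorem legendre_trivializes (f : ℝ → ℝ) (s : Set ℝ) (hs : IsOpen s)
    (hf : ContDiffOn ℝ 4 f s)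
    (hf2 : ∀ x ∈ s, deriv (deriv f) x ≠ 0)
    (hode : ∀ x ∈ s,
      deriv (deriv (deriv (deriv f))) x * deriv (deriv f) x
        = 3 * (deriv (deriv (deriv f)) x) ^ 2)
    (xinv : ℝ → ℝ) (t : Set ℝ) (ht : IsOpen t) (hcont : ContinuousOn xinv t)
    (hmap : ∀ X ∈ t, xinv X ∈ s)
    (hinv : ∀ X ∈ t, deriv f (xinv X) = -X) :
    ContDiffOn ℝ 4 (fun X => f (xinv X) - xinv X * deriv f (xinv X)) t ∧
    ∀ X ∈ t,
      deriv (deriv (deriv (deriv (fun X => f (xinv X) - xinv X * deriv f (xinv X))))) X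
        = (deriv (deriv (deriv (deriv f))) (xinv X) * deriv (deriv f) (xinv X)
            - 3 * (deriv (deriv (deriv f)) (xinv X)) ^ 2)
          / (deriv (deriv f) (xinv X)) ^ 5 ∧
      deriv (deriv (deriv (deriv (fun X => f (xinv X) - xinv X * deriv f (xinv X))))) X
        = 0 := by
  -- smoothness of the successive derivatives of `f`
  have hf1 : ContDiffOn ℝ 3 (deriv f) s := hf.deriv_of_isOpen hs (by norm_num)
  have hf2' : ContDiffOn ℝ 2 (deriv (deriv f)) s := hf1.deriv_of_isOpen hs (by norm_num)
  have hf3 : ContDiffOn ℝ 1 (deriv (deriv (deriv f))) s := hf2'.deriv_of_isOpen hs (by norm_num)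
  -- pointwise derivatives
  have hdf : ∀ x ∈ s, HasDerivAt f (deriv f x) x := fun x hx =>
    ((hf.differentiableOn (by norm_num)).differentiableAt (hs.mem_nhds hx)).hasDerivAt
  have hdf1 : ∀ x ∈ s, HasDerivAt (deriv f) (deriv (deriv f) x) x := fun x hx =>
    ((hf1.differentiableOn (by norm_num)).differentiableAt (hs.mem_nhds hx)).hasDerivAt
  have hdf2 : ∀ x ∈ s, HasDerivAt (deriv (deriv f)) (deriv (deriv (deriv f)) x) x := fun x hx =>
    ((hf2'.differentiableOn (by norm_num)).differentiableAt (hs.mem_nhds hx)).hasDerivAt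
  have hdf3 : ∀ x ∈ s,
      HasDerivAt (deriv (deriv (deriv f))) (deriv (deriv (deriv (deriv f))) x) x := fun x hx =>
    ((hf3.differentiableOn (by norm_num)).differentiableAt (hs.mem_nhds hx)).hasDerivAt
  set u : ℝ → ℝ := fun X => -(deriv (deriv f) (xinv X))⁻¹ with hu
  -- derivative of the local inverse
  have hxinv : ∀ X ∈ t, HasDerivAt xinv (u X) X := by
    intro X hX
    have hx := hmap X hX
    have hF : HasDerivAt (fun x => -(deriv f x)) (-(deriv (deriv f) (xinv X))) (xinv X) :=
      (hdf1 _ hx).neg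
    have heq : ∀ᶠ Y in 𝓝 X, (fun x => -(deriv f x)) (xinv Y) = Y := by
      filter_upwards [ht.mem_nhds hX] with Y hY
      simp [hinv Y hY]
    have h := HasDerivAt.of_local_left_inverse (hcont.continuousAt (ht.mem_nhds hX)) hF
      (by simpa using hf2 _ hx) heq
    simpa [hu, inv_neg] using h
  set g : ℝ → ℝ := fun X => f (xinv X) - xinv X * deriv f (xinv X) with hgdef
  -- first derivative of g
  have hg1 : ∀ X ∈ t, HasDerivAt g (xinv X) X := by
    intro X hX
    have hx := hmap X hX
    have h1 : HasDerivAt (fun X => f (xinv X)) (deriv f (xinv X) * u X) X :=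
      (hdf _ hx).comp X (hxinv X hX)
    have h1' : HasDerivAt (fun X => deriv f (xinv X)) (deriv (deriv f) (xinv X) * u X) X :=
      (hdf1 _ hx).comp X (hxinv X hX)
    have h2 : HasDerivAt (fun X => xinv X * deriv f (xinv X))
        (u X * deriv f (xinv X) + xinv X * (deriv (deriv f) (xinv X) * u X)) X :=
      (hxinv X hX).mul h1'
    have h3 := h1.sub h2
    refine h3.congr_deriv ?_
    have h2ne := hf2 _ hx
    simp only [hu, Pi.pow_apply]
    field_simp
    ring
  have hdg : Set.EqOn (deriv g) xinv t := fun X hX => (hg1 X hX).deriv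
  -- second derivative
  have hdg2 : ∀ X ∈ t, deriv (deriv g) X = u X := by
    intro X hX
    have heq : deriv g =ᶠ[𝓝 X] xinv := Filter.eventuallyEq_of_mem (ht.mem_nhds hX) hdg
    rw [heq.deriv_eq, (hxinv X hX).deriv]
  -- derivative of u
  set v : ℝ → ℝ :=
    fun X => -(deriv (deriv (deriv f)) (xinv X)) / (deriv (deriv f) (xinv X)) ^ 3 with hv
  have hud : ∀ X ∈ t, HasDerivAt u (v X) X := by
    intro X hX
    have hx := hmap X hX
    have hcomp : HasDerivAt (fun X => deriv (deriv f) (xinv X))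
        (deriv (deriv (deriv f)) (xinv X) * u X) X := (hdf2 _ hx).comp X (hxinv X hX)
    have h := (hcomp.inv (hf2 _ hx)).neg
    refine h.congr_deriv ?_
    have h2ne := hf2 _ hx
    rw [hv]
    simp only [hu]
    field_simp
  have hdg3 : ∀ X ∈ t, deriv (deriv (deriv g)) X = v X := by
    intro X hX
    have heq : deriv (deriv g) =ᶠ[𝓝 X] u :=
      Filter.eventuallyEq_of_mem (ht.mem_nhds hX) (fun Y hY => hdg2 Y hY)
    rw [heq.deriv_eq, (hud X hX).deriv]
  -- derivative of v
  have hvd : ∀ X ∈ t, HasDerivAt v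
      ((deriv (deriv (deriv (deriv f))) (xinv X) * deriv (deriv f) (xinv X)
          - 3 * (deriv (deriv (deriv f)) (xinv X)) ^ 2)
        / (deriv (deriv f) (xinv X)) ^ 5) X := by
    intro X hX
    have hx := hmap X hX
    have hnum : HasDerivAt (fun X => -(deriv (deriv (deriv f)) (xinv X)))
        (-(deriv (deriv (deriv (deriv f))) (xinv X) * u X)) X :=
      ((hdf3 _ hx).comp X (hxinv X hX)).neg
    have hcomp : HasDerivAt (fun X => deriv (deriv f) (xinv X))
        (deriv (deriv (deriv f)) (xinv X) * u X) X := (hdf2 _ hx).comp X (hxinv X hX)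
    have hden := hcomp.pow 3
    have h := hnum.div hden (pow_ne_zero 3 (hf2 _ hx))
    refine h.congr_deriv ?_
    have h2ne := hf2 _ hx
    simp only [hu, Pi.pow_apply]
    field_simp
    ring
  have hdg4 : ∀ X ∈ t, deriv (deriv (deriv (deriv g))) X
      = (deriv (deriv (deriv (deriv f))) (xinv X) * deriv (deriv f) (xinv X)
          - 3 * (deriv (deriv (deriv f)) (xinv X)) ^ 2)
        / (deriv (deriv f) (xinv X)) ^ 5 := by
    intro X hX
    have heq : deriv (deriv (deriv g)) =ᶠ[𝓝 X] v :=
      Filter.eventuallyEq_of_mem (ht.mem_nhds hX) (fun Y hY => hdg3 Y hY)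
    rw [heq.deriv_eq, (hvd X hX).deriv]
  -- smoothness of xinv
  have key : ∀ n : ℕ, n ≤ 2 → ContDiffOn ℝ n xinv t → ContDiffOn ℝ n u t := by
    intro n hn hx
    have hc : ContDiffOn ℝ n (fun X => deriv (deriv f) (xinv X)) t :=
      (hf2'.of_le (by exact_mod_cast hn)).comp hx (fun X hX => hmap X hX)
    exact (hc.inv (fun X hX => hf2 _ (hmap X hX))).neg
  have step : ∀ n : ℕ, n ≤ 2 → ContDiffOn ℝ n xinv t → ContDiffOn ℝ (n + 1) xinv t := by
    intro n hn hx
    have h := (contDiffOn_succ_iff_deriv_of_isOpen (n := n) ht).mpr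
      ⟨fun X hX => (hxinv X hX).differentiableAt.differentiableWithinAt,
        fun h => absurd h (by simp),
        (key n hn hx).congr (fun X hX => (hxinv X hX).deriv)⟩
    exact_mod_cast h
  have c0 : ContDiffOn ℝ 0 xinv t := by
    rw [contDiffOn_zero]; exact hcont
  have c1 : ContDiffOn ℝ 1 xinv t := by exact_mod_cast step 0 (by norm_num) (by exact_mod_cast c0)
  have c2 : ContDiffOn ℝ 2 xinv t := by exact_mod_cast step 1 (by norm_num) (by exact_mod_cast c1)
  have c3 : ContDiffOn ℝ 3 xinv t := by exact_mod_cast step 2 (by norm_num) (by exact_mod_cast c2)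
  have hgC : ContDiffOn ℝ 4 g t := by
    have h4 : (4 : WithTop ℕ∞) = 3 + 1 := by norm_num
    rw [h4, contDiffOn_succ_iff_deriv_of_isOpen ht]
    exact ⟨fun X hX => (hg1 X hX).differentiableAt.differentiableWithinAt,
      fun h => absurd h (by simp), c3.congr hdg⟩
  refine ⟨hgC, fun X hX => ?_⟩
  have h4 := hdg4 X hX
  refine ⟨h4, ?_⟩
  rw [h4, hode _ (hmap X hX)]
  simp
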